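/- Let S, Q ≥ 1 and let Y = (Y_1,...,Y_Q) be a multinomial random vector with S trials and uniform cell probabilities 1/Q. Then the Shannon entropy (base 2) of Y equals Q · ∑_{i=0}^{S} C(S,i) (1/Q)^i (1 - 1/Q)^{S-i} log₂(i!) − log₂(S!/Q^S). -/

import Mathlib

open Finset

lemma sum_multinomial_nat {ι : Type*} [DecidableEq ι] (s : Finset ι) (n : ℕ) :
    ∑ k ∈ piAntidiag s n, Nat.multinomial s k = s.card ^ n := by
  simpa using (Finset.sum_pow_eq_sum_piAntidiag s (fun _ => (1 : ℕ)) n).symm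

lemma trinomial_symm (j i m : ℕ) :
    (j + i + m).choose j * (i + m).choose i = (j + i + m).choose i * (j + m).choose j := by
  have h1 : (j + i + m).choose j = (j + i + m).choose (i + m) := by
    rw [show i + m = (j + i + m) - j by omega]
    exact (Nat.choose_symm (by omega)).symm
  have h2 := Nat.choose_mul (n := j + i + m) (k := i + m) (s := i) (by omega)
  rw [h1, h2, show j + i + m - i = j + m by omega, show i + m - i = m by omega,
    Nat.choose_symm_add]

lemma antidiag_triple_swap (F : ℕ → ℕ → ℕ → ℝ) (n : ℕ) :
    ∑ p ∈ antidiagonal n, ∑ q ∈ antidiagonal p.2, F p.1 q.1 q.2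
    = ∑ p ∈ antidiagonal n, ∑ q ∈ antidiagonal p.2, F q.1 p.1 q.2 := by
  rw [Finset.sum_sigma', Finset.sum_sigma']
  refine Finset.sum_nbij' (fun x => ⟨(x.2.1, x.1.1 + x.2.2), (x.1.1, x.2.2)⟩)
    (fun x => ⟨(x.2.1, x.1.1 + x.2.2), (x.1.1, x.2.2)⟩) ?_ ?_ ?_ ?_ ?_ <;>
    rintro ⟨⟨a, b⟩, ⟨c, d⟩⟩ h <;>
    simp_all [Finset.mem_sigma, Finset.mem_antidiagonal] <;> omega

lemma binom_sum (c m : ℕ) :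
    (c : ℝ) * ∑ q ∈ antidiagonal m, (m.choose q.1 : ℝ) * ((c - 1 : ℕ) : ℝ) ^ q.2
      = (c : ℝ) * (c : ℝ) ^ m := by
  rcases Nat.eq_zero_or_pos c with hc | hc
  · simp [hc]
  · congr 1
    rw [Finset.Nat.sum_antidiagonal_eq_sum_range_succ_mk]
    have : ((c : ℝ)) = 1 + ((c - 1 : ℕ) : ℝ) := by
      push_cast [hc]; ring
    rw [this, add_pow]
    simp [mul_comm]

lemma multinomial_marginal {ι : Type*} [DecidableEq ι] (g : ℕ → ℝ) (s : Finset ι) (n : ℕ) :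
    ∑ k ∈ piAntidiag s n, (Nat.multinomial s k : ℝ) * ∑ j ∈ s, g (k j)
    = ∑ p ∈ antidiagonal n,
        (s.card : ℝ) * (n.choose p.1 : ℝ) * ((s.card - 1 : ℕ) : ℝ) ^ p.2 * g p.1 := by
  induction s using Finset.cons_induction generalizing n with
  | empty => simp [piAntidiag_empty]
  | cons a s ha ih =>
    classical
    rw [piAntidiag_cons, sum_disjiUnion]
    have key : ∀ p ∈ antidiagonal n,
        ∑ k ∈ (piAntidiag s p.2).map (addRightEmbedding fun t => if t = a then p.1 else 0),
          (Nat.multinomial (cons a s ha) k : ℝ) * ∑ j ∈ cons a s ha, g (k j)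
        = (n.choose p.1 : ℝ) * g p.1 * (s.card : ℝ) ^ p.2
          + ∑ q ∈ antidiagonal p.2, (n.choose p.1 : ℝ) *
              ((s.card : ℝ) * (p.2.choose q.1 : ℝ) * ((s.card - 1 : ℕ) : ℝ) ^ q.2 * g q.1) := by
      rintro ⟨p1, p2⟩ hp
      rw [HasAntidiagonal.mem_antidiagonal] at hp
      rw [sum_map]
      have hterm : ∀ k ∈ piAntidiag s p2,
          (Nat.multinomial (cons a s ha)
              ((addRightEmbedding fun t => if t = a then p1 else 0) k) : ℝ) *
            ∑ j ∈ cons a s ha, g (((addRightEmbedding fun t => if t = a then p1 else 0) k) j)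
          = (n.choose p1 : ℝ) * ((Nat.multinomial s k : ℝ) * g p1)
            + (n.choose p1 : ℝ) * ((Nat.multinomial s k : ℝ) * ∑ j ∈ s, g (k j)) := by
        intro k hk
        rw [mem_piAntidiag] at hk
        have hka : k a = 0 := by
          by_contra h; exact ha (hk.2 a h)
        have happ : ∀ j, ((addRightEmbedding fun t => if t = a then p1 else 0) k) j
            = k j + if j = a then p1 else 0 := fun j => rfl
        have happa : ((addRightEmbedding fun t => if t = a then p1 else 0) k) a = p1 := by
          rw [happ, hka, if_pos rfl, zero_add]
        have happs : ∀ j ∈ s, ((addRightEmbedding fun t => if t = a then p1 else 0) k) j = k j := by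
          intro j hj
          have hja : j ≠ a := by rintro rfl; exact ha hj
          rw [happ, if_neg hja, add_zero]
        have hmul : Nat.multinomial (cons a s ha)
            ((addRightEmbedding fun t => if t = a then p1 else 0) k)
            = n.choose p1 * Nat.multinomial s k := by
          rw [Nat.multinomial_cons, happa,
            Finset.sum_congr rfl happs, hk.1,
            Nat.multinomial_congr happs, hp]
        have hg : ∑ j ∈ cons a s ha, g (((addRightEmbedding fun t => if t = a then p1 else 0) k) j)
            = g p1 + ∑ j ∈ s, g (k j) := by
          rw [Finset.sum_cons, happa]
          congr 1
          exact Finset.sum_congr rfl fun j hj => by rw [happs j hj]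
        rw [hmul, hg]
        push_cast
        ring
      rw [Finset.sum_congr rfl hterm, Finset.sum_add_distrib]
      have h1 : ∑ k ∈ piAntidiag s p2, (Nat.multinomial s k : ℝ) = (s.card : ℝ) ^ p2 := by
        rw [← Nat.cast_sum, sum_multinomial_nat]
        push_cast
        ring
      congr 1
      · rw [← Finset.mul_sum, ← Finset.sum_mul, h1]
        ring
      · rw [← Finset.mul_sum, ih, Finset.mul_sum]
    rw [Finset.sum_congr rfl key, Finset.sum_add_distrib]
    -- Now handle the double sum
    have hB : ∑ p ∈ antidiagonal n, ∑ q ∈ antidiagonal p.2, (n.choose p.1 : ℝ) *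
          ((s.card : ℝ) * (p.2.choose q.1 : ℝ) * ((s.card - 1 : ℕ) : ℝ) ^ q.2 * g q.1)
        = ∑ p ∈ antidiagonal n,
            (s.card : ℝ) * (n.choose p.1 : ℝ) * (s.card : ℝ) ^ p.2 * g p.1 := by
      have e1 : ∀ p ∈ antidiagonal n, ∀ q ∈ antidiagonal p.2,
          (n.choose p.1 : ℝ) *
            ((s.card : ℝ) * (p.2.choose q.1 : ℝ) * ((s.card - 1 : ℕ) : ℝ) ^ q.2 * g q.1)
          = (s.card : ℝ) * ((n.choose q.1 : ℝ) * g q.1 *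
              (((p.1 + q.2).choose p.1 : ℝ) * ((s.card - 1 : ℕ) : ℝ) ^ q.2)) := by
        rintro ⟨p1, p2⟩ hp ⟨q1, q2⟩ hq
        rw [HasAntidiagonal.mem_antidiagonal] at hp hq
        simp only
        have ht := trinomial_symm p1 q1 q2
        rw [show p1 + q1 + q2 = n by omega] at ht
        have hq2 : p2.choose q1 = (q1 + q2).choose q1 := by rw [hq]
        rw [hq2]
        have hcast : (n.choose p1 : ℝ) * ((q1 + q2).choose q1 : ℝ)
            = (n.choose q1 : ℝ) * ((p1 + q2).choose p1 : ℝ) := by exact_mod_cast ht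
        linear_combination ((s.card : ℝ) * ((s.card - 1 : ℕ) : ℝ) ^ q2 * g q1) * hcast
      rw [Finset.sum_congr rfl fun p hp => Finset.sum_congr rfl (e1 p hp)]
      have := antidiag_triple_swap
        (fun x y z => (s.card : ℝ) * ((n.choose x : ℝ) * g x *
          (((y + z).choose y : ℝ) * ((s.card - 1 : ℕ) : ℝ) ^ z))) n
      rw [← this]
      refine Finset.sum_congr rfl fun p hp => ?_
      rw [← Finset.mul_sum, ← Finset.mul_sum]
      have e2 : ∀ q ∈ antidiagonal p.2,
          ((q.1 + q.2).choose q.1 : ℝ) * ((s.card - 1 : ℕ) : ℝ) ^ q.2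
          = (p.2.choose q.1 : ℝ) * ((s.card - 1 : ℕ) : ℝ) ^ q.2 := by
        rintro ⟨q1, q2⟩ hq
        rw [HasAntidiagonal.mem_antidiagonal] at hq
        simp only
        rw [hq]
      rw [Finset.sum_congr rfl e2]
      have hb := binom_sum s.card p.2
      linear_combination ((n.choose p.1 : ℝ) * g p.1) * hb
    rw [hB, ← Finset.sum_add_distrib]
    refine Finset.sum_congr rfl fun p hp => ?_
    rw [card_cons]
    push_cast
    ring

/-- The entropy (base 2) of a multinomial random vector with `S` trials and
uniform cell probabilities `1/Q`. -/
theorem entropy_uniform_multinomial (Q S : ℕ) (hQ : 1 ≤ Q) (hS : 1 ≤ S) :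
    ∑ y ∈ Finset.Nat.antidiagonalTuple Q S,
        -(((Nat.multinomial Finset.univ y : ℝ) * (1 / Q) ^ S) *
          Real.logb 2 ((Nat.multinomial Finset.univ y : ℝ) * (1 / Q) ^ S))
    = (Q : ℝ) * ∑ i ∈ Finset.range (S + 1),
          (S.choose i : ℝ) * (1 / Q) ^ i * (1 - 1 / Q) ^ (S - i) *
            Real.logb 2 (Nat.factorial i)
      - Real.logb 2 ((Nat.factorial S : ℝ) / Q ^ S) := by
  have hQ0 : (0 : ℝ) < Q := by exact_mod_cast hQ
  have hQne : (Q : ℝ) ≠ 0 := ne_of_gt hQ0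
  set g : ℕ → ℝ := fun i => Real.logb 2 (Nat.factorial i) with hg
  have hC : Real.logb 2 ((Nat.factorial S : ℝ) / Q ^ S)
      = Real.logb 2 (Nat.factorial S : ℝ) - S * Real.logb 2 Q := by
    rw [Real.logb_div (by positivity) (by positivity), Real.logb_pow]
  rw [← Finset.piAntidiag_univ_fin_eq_antidiagonalTuple S Q]
  have hterm : ∀ y ∈ piAntidiag (univ : Finset (Fin Q)) S,
      -(((Nat.multinomial Finset.univ y : ℝ) * (1 / Q) ^ S) *
          Real.logb 2 ((Nat.multinomial Finset.univ y : ℝ) * (1 / Q) ^ S))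
      = ((Nat.multinomial Finset.univ y : ℝ) * (1 / Q) ^ S) * (∑ j ∈ univ, g (y j))
        - ((Nat.multinomial Finset.univ y : ℝ) * (1 / Q) ^ S) *
            Real.logb 2 ((Nat.factorial S : ℝ) / Q ^ S) := by
    intro y hy
    rw [mem_piAntidiag] at hy
    have hsum : ∑ j, y j = S := hy.1
    have hMpos : (0 : ℝ) < (Nat.multinomial (univ : Finset (Fin Q)) y : ℝ) := by
      exact_mod_cast Nat.multinomial_pos _ _
    have hprodpos : (0 : ℝ) < ∏ j, ((y j).factorial : ℝ) := by positivity
    have hMcast : (Nat.multinomial (univ : Finset (Fin Q)) y : ℝ)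
        = (Nat.factorial S : ℝ) / ∏ j, ((y j).factorial : ℝ) := by
      have hspec := Nat.multinomial_spec (univ : Finset (Fin Q)) y
      rw [hsum] at hspec
      have h2 : (∏ j, ((y j).factorial : ℝ)) * (Nat.multinomial (univ : Finset (Fin Q)) y : ℝ)
          = (Nat.factorial S : ℝ) := by exact_mod_cast hspec
      field_simp
      linarith [h2]
    have hlogM : Real.logb 2 (Nat.multinomial (univ : Finset (Fin Q)) y : ℝ)
        = Real.logb 2 (Nat.factorial S : ℝ) - ∑ j ∈ univ, g (y j) := by
      rw [hMcast, Real.logb_div (by positivity) (ne_of_gt hprodpos),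
        Real.logb_prod _ _ (fun j _ => by positivity)]
    have hlogpow : Real.logb 2 ((1 / (Q : ℝ)) ^ S) = -(S * Real.logb 2 Q) := by
      rw [Real.logb_pow, one_div, Real.logb_inv]
      ring
    rw [Real.logb_mul (ne_of_gt hMpos) (by positivity), hlogM, hlogpow, hC]
    ring
  rw [Finset.sum_congr rfl hterm, Finset.sum_sub_distrib]
  have hPsum : ∑ y ∈ piAntidiag (univ : Finset (Fin Q)) S,
      ((Nat.multinomial (univ : Finset (Fin Q)) y : ℝ) * (1 / Q) ^ S) = 1 := by
    rw [← Finset.sum_mul, ← Nat.cast_sum, sum_multinomial_nat, card_univ, Fintype.card_fin]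
    rw [one_div, inv_pow, Nat.cast_pow]
    field_simp
  have hmain : ∑ y ∈ piAntidiag (univ : Finset (Fin Q)) S,
      ((Nat.multinomial (univ : Finset (Fin Q)) y : ℝ) * (1 / Q) ^ S) * ∑ j ∈ univ, g (y j)
      = (Q : ℝ) * ∑ i ∈ Finset.range (S + 1),
          (S.choose i : ℝ) * (1 / Q) ^ i * (1 - 1 / Q) ^ (S - i) * g i := by
    have e : ∑ y ∈ piAntidiag (univ : Finset (Fin Q)) S,
        ((Nat.multinomial (univ : Finset (Fin Q)) y : ℝ) * (1 / Q) ^ S) * ∑ j ∈ univ, g (y j)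
        = (1 / (Q : ℝ)) ^ S * ∑ y ∈ piAntidiag (univ : Finset (Fin Q)) S,
            (Nat.multinomial (univ : Finset (Fin Q)) y : ℝ) * ∑ j ∈ univ, g (y j) := by
      rw [Finset.mul_sum]
      exact Finset.sum_congr rfl fun y _ => by ring
    rw [e, multinomial_marginal g (univ : Finset (Fin Q)) S, card_univ, Fintype.card_fin,
      Finset.Nat.sum_antidiagonal_eq_sum_range_succ_mk, Finset.mul_sum, Finset.mul_sum]
    refine Finset.sum_congr rfl fun i hi => ?_
    rw [mem_range] at hi
    have h1 : ((Q - 1 : ℕ) : ℝ) = (Q : ℝ) - 1 := by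
      rw [Nat.cast_sub hQ]; norm_num
    have h2 : ((1 : ℝ) / Q) ^ S = (1 / Q) ^ i * (1 / Q) ^ (S - i) := by
      rw [← pow_add]
      congr 1
      omega
    have h3 : (1 : ℝ) - 1 / Q = ((Q : ℝ) - 1) / Q := by field_simp
    rw [h1, h2, h3, div_pow]
    have hQpow : ((Q : ℝ)) ^ (S - i) ≠ 0 := by positivity
    field_simp
    simp only [div_pow, one_pow]
    ring
  rw [hmain, ← Finset.sum_mul, hPsum, one_mul]
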